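/- Let u be a classical solution of the forward problem, and write ‖F‖² := ∫₀^T ∫₀^ℓ F(x,t)² dx dt and C_e² := exp(T/ρ₀). Then the boundary slope-velocity trace estimates hold: ∫₀^T (∂ₜ∂ₓu(0,t))² dt ≤ (5ℓ/(6κ₀)) C_e² ‖F‖² and ∫₀^T (∂ₜ∂ₓu(ℓ,t))² dt ≤ (5ℓ/(6κ₀)) C_e² ‖F‖². -/

import Mathlib

open Set

/-- A classical solution of the forward problem for the damped Euler–Bernoulli beam
equation `ρ_A(x) uₜₜ + μ(x) uₜ − (T_r(x) uₓ)ₓ + (r(x) uₓₓ + κ(x) uₓₓₜ)ₓₓ = F(x,t)` on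
`(0,ℓ) × (0,T)`, with homogeneous initial conditions and simply supported boundary
conditions.  The fields `ux, uxx, ut, utt, uxt, uxxt` are the partial derivatives of
`u`, `Ax` is the spatial derivative of `T_r(x) uₓ`, and `Bx, Bxx` are the first and
second spatial derivatives of the bending moment `B(x,t) = r(x) uₓₓ + κ(x) uₓₓₜ`. -/
structure ForwardSol (ℓ T : ℝ) (ρA μ Tr r κ : ℝ → ℝ) (F : ℝ → ℝ → ℝ) where
  u : ℝ → ℝ → ℝ
  ux : ℝ → ℝ → ℝ
  uxx : ℝ → ℝ → ℝ
  ut : ℝ → ℝ → ℝ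
  utt : ℝ → ℝ → ℝ
  uxt : ℝ → ℝ → ℝ
  uxxt : ℝ → ℝ → ℝ
  Ax : ℝ → ℝ → ℝ
  Bx : ℝ → ℝ → ℝ
  Bxx : ℝ → ℝ → ℝ
  smooth : ContDiffOn ℝ (⊤ : ℕ∞) (fun p : ℝ × ℝ => u p.1 p.2) (Icc 0 ℓ ×ˢ Icc 0 T)
  hux : ∀ x ∈ Icc (0:ℝ) ℓ, ∀ t ∈ Icc (0:ℝ) T, HasDerivAt (fun y => u y t) (ux x t) x
  huxx : ∀ x ∈ Icc (0:ℝ) ℓ, ∀ t ∈ Icc (0:ℝ) T, HasDerivAt (fun y => ux y t) (uxx x t) x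
  hut : ∀ x ∈ Icc (0:ℝ) ℓ, ∀ t ∈ Icc (0:ℝ) T, HasDerivAt (fun s => u x s) (ut x t) t
  hutt : ∀ x ∈ Icc (0:ℝ) ℓ, ∀ t ∈ Icc (0:ℝ) T, HasDerivAt (fun s => ut x s) (utt x t) t
  huxt : ∀ x ∈ Icc (0:ℝ) ℓ, ∀ t ∈ Icc (0:ℝ) T, HasDerivAt (fun s => ux x s) (uxt x t) t
  huxxt : ∀ x ∈ Icc (0:ℝ) ℓ, ∀ t ∈ Icc (0:ℝ) T, HasDerivAt (fun s => uxx x s) (uxxt x t) t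
  hAx : ∀ x ∈ Icc (0:ℝ) ℓ, ∀ t ∈ Icc (0:ℝ) T,
    HasDerivAt (fun y => Tr y * ux y t) (Ax x t) x
  hBx : ∀ x ∈ Icc (0:ℝ) ℓ, ∀ t ∈ Icc (0:ℝ) T,
    HasDerivAt (fun y => r y * uxx y t + κ y * uxxt y t) (Bx x t) x
  hBxx : ∀ x ∈ Icc (0:ℝ) ℓ, ∀ t ∈ Icc (0:ℝ) T, HasDerivAt (fun y => Bx y t) (Bxx x t) x
  cont_ux : ContinuousOn (fun p : ℝ × ℝ => ux p.1 p.2) (Icc 0 ℓ ×ˢ Icc 0 T)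
  cont_uxx : ContinuousOn (fun p : ℝ × ℝ => uxx p.1 p.2) (Icc 0 ℓ ×ˢ Icc 0 T)
  cont_ut : ContinuousOn (fun p : ℝ × ℝ => ut p.1 p.2) (Icc 0 ℓ ×ˢ Icc 0 T)
  cont_utt : ContinuousOn (fun p : ℝ × ℝ => utt p.1 p.2) (Icc 0 ℓ ×ˢ Icc 0 T)
  cont_uxt : ContinuousOn (fun p : ℝ × ℝ => uxt p.1 p.2) (Icc 0 ℓ ×ˢ Icc 0 T)
  cont_uxxt : ContinuousOn (fun p : ℝ × ℝ => uxxt p.1 p.2) (Icc 0 ℓ ×ˢ Icc 0 T)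
  cont_Ax : ContinuousOn (fun p : ℝ × ℝ => Ax p.1 p.2) (Icc 0 ℓ ×ˢ Icc 0 T)
  cont_Bx : ContinuousOn (fun p : ℝ × ℝ => Bx p.1 p.2) (Icc 0 ℓ ×ˢ Icc 0 T)
  cont_Bxx : ContinuousOn (fun p : ℝ × ℝ => Bxx p.1 p.2) (Icc 0 ℓ ×ˢ Icc 0 T)
  pde : ∀ x ∈ Ioo (0:ℝ) ℓ, ∀ t ∈ Ioo (0:ℝ) T,
    ρA x * utt x t + μ x * ut x t - Ax x t + Bxx x t = F x t
  init_u : ∀ x ∈ Ioo (0:ℝ) ℓ, u x 0 = 0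
  init_ut : ∀ x ∈ Ioo (0:ℝ) ℓ, ut x 0 = 0
  bc_u0 : ∀ t ∈ Icc (0:ℝ) T, u 0 t = 0
  bc_ul : ∀ t ∈ Icc (0:ℝ) T, u ℓ t = 0
  bc_m0 : ∀ t ∈ Icc (0:ℝ) T, r 0 * uxx 0 t + κ 0 * uxxt 0 t = 0
  bc_ml : ∀ t ∈ Icc (0:ℝ) T, r ℓ * uxx ℓ t + κ ℓ * uxxt ℓ t = 0

section H
open MeasureTheory intervalIntegral

section Helpers

/-- Tietze extension of a two-variable continuous-on-closed-set function. -/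
lemma exists_ext {s : Set (ℝ × ℝ)} (hs : IsClosed s) {f : ℝ → ℝ → ℝ}
    (hf : ContinuousOn (fun p : ℝ × ℝ => f p.1 p.2) s) :
    ∃ g : ℝ → ℝ → ℝ, Continuous (fun p : ℝ × ℝ => g p.1 p.2) ∧
      ∀ p ∈ s, g p.1 p.2 = f p.1 p.2 := by
  obtain ⟨G, hG⟩ := ContinuousMap.exists_restrict_eq (Y := ℝ) hs
    ⟨s.restrict (fun p : ℝ × ℝ => f p.1 p.2), hf.restrict⟩
  refine ⟨fun x t => G (x, t), by exact G.continuous, ?_⟩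
  intro p hp
  have := congrFun (congrArg ContinuousMap.toFun hG) ⟨p, hp⟩
  exact this

lemma contOn_slice_x {a b c d : ℝ} {f : ℝ → ℝ → ℝ}
    (hf : ContinuousOn (fun p : ℝ × ℝ => f p.1 p.2) (Icc a b ×ˢ Icc c d))
    {t : ℝ} (ht : t ∈ Icc c d) : ContinuousOn (fun x => f x t) (Icc a b) := by
  have : ContinuousOn (fun x : ℝ => ((x, t) : ℝ × ℝ)) (Icc a b) :=
    (continuous_id.prodMk continuous_const).continuousOn
  exact hf.comp this (fun x hx => ⟨hx, ht⟩)

lemma contOn_slice_t {a b c d : ℝ} {f : ℝ → ℝ → ℝ}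
    (hf : ContinuousOn (fun p : ℝ × ℝ => f p.1 p.2) (Icc a b ×ˢ Icc c d))
    {x : ℝ} (hx : x ∈ Icc a b) : ContinuousOn (fun t => f x t) (Icc c d) := by
  have : ContinuousOn (fun t : ℝ => ((x, t) : ℝ × ℝ)) (Icc c d) :=
    (continuous_const.prodMk continuous_id).continuousOn
  exact hf.comp this (fun t ht => ⟨hx, ht⟩)

/-- parametric continuity of an interval integral -/
lemma contOn_param {a b c d : ℝ} {f : ℝ → ℝ → ℝ} (hab : a ≤ b)
    (hf : ContinuousOn (fun p : ℝ × ℝ => f p.1 p.2) (Icc a b ×ˢ Icc c d)) :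
    ContinuousOn (fun t => ∫ x in a..b, f x t) (Icc c d) := by
  obtain ⟨g, hg, hfg⟩ := exists_ext (isClosed_Icc.prod isClosed_Icc) hf
  have hcont : Continuous fun t => ∫ x in a..b, g x t := by
    have : Continuous (Function.uncurry (fun t x => g x t)) := by
      exact hg.comp (continuous_snd.prodMk continuous_fst)
    exact continuous_parametric_intervalIntegral_of_continuous' (f := fun t x => g x t) this a b
  refine hcont.continuousOn.congr ?_
  intro t ht
  refine intervalIntegral.integral_congr ?_
  intro x hx
  rw [uIcc_of_le hab] at hx
  exact (hfg (x, t) ⟨hx, ht⟩).symm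

/-- Fubini on a rectangle for a continuous function. -/
lemma fubini_rect {a b c d : ℝ} {f : ℝ → ℝ → ℝ} (hab : a ≤ b) (hcd : c ≤ d)
    (hf : ContinuousOn (fun p : ℝ × ℝ => f p.1 p.2) (Icc a b ×ˢ Icc c d)) :
    ∫ x in a..b, ∫ t in c..d, f x t = ∫ t in c..d, ∫ x in a..b, f x t := by
  obtain ⟨g, hg, hfg⟩ := exists_ext (isClosed_Icc.prod isClosed_Icc) hf
  have h1 : ∫ x in a..b, ∫ t in c..d, f x t = ∫ x in a..b, ∫ t in c..d, g x t := by
    refine intervalIntegral.integral_congr (fun x hx => ?_)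
    rw [uIcc_of_le hab] at hx
    refine intervalIntegral.integral_congr (fun t ht => ?_)
    rw [uIcc_of_le hcd] at ht
    exact (hfg (x, t) ⟨hx, ht⟩).symm
  have h2 : ∫ t in c..d, ∫ x in a..b, f x t = ∫ t in c..d, ∫ x in a..b, g x t := by
    refine intervalIntegral.integral_congr (fun t ht => ?_)
    rw [uIcc_of_le hcd] at ht
    refine intervalIntegral.integral_congr (fun x hx => ?_)
    rw [uIcc_of_le hab] at hx
    exact (hfg (x, t) ⟨hx, ht⟩).symm
  rw [h1, h2]
  rw [intervalIntegral.integral_of_le hab, intervalIntegral.integral_of_le hcd]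
  simp_rw [intervalIntegral.integral_of_le hcd, intervalIntegral.integral_of_le hab]
  have hint : Integrable (Function.uncurry g)
      ((volume.restrict (Ioc a b)).prod (volume.restrict (Ioc c d))) := by
    rw [Measure.prod_restrict]
    have : IntegrableOn (Function.uncurry g) (Icc a b ×ˢ Icc c d) volume := by
      exact hg.continuousOn.integrableOn_compact (isCompact_Icc.prod isCompact_Icc)
    exact this.mono_set (prod_mono Ioc_subset_Icc_self Ioc_subset_Icc_self)
  exact MeasureTheory.integral_integral_swap hint

end Helpers

lemma le_on_Icc_of_Ioo {a b : ℝ} {f g : ℝ → ℝ} (hab : a < b)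
    (hf : ContinuousOn f (Icc a b)) (hg : ContinuousOn g (Icc a b))
    (h : ∀ x ∈ Ioo a b, f x ≤ g x) : ∀ x ∈ Icc a b, f x ≤ g x := by
  intro x hx
  have hcl : x ∈ closure (Ioo a b) := by
    rw [closure_Ioo hab.ne]; exact hx
  have hsub : Ioo a b ⊆ Icc a b := Ioo_subset_Icc_self
  have hcf : ContinuousWithinAt f (Ioo a b) x := (hf x hx).mono hsub
  have hcg : ContinuousWithinAt g (Ioo a b) x := (hg x hx).mono hsub
  have hne : (nhdsWithin x (Ioo a b)).NeBot := mem_closure_iff_nhdsWithin_neBot.mp hcl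
  exact le_of_tendsto_of_tendsto hcf hcg
    (Filter.eventually_inf_principal.mpr (Filter.Eventually.of_forall h))

lemma eqOn_zero_Icc_of_Ioo {a b : ℝ} {f : ℝ → ℝ} (hab : a < b)
    (hf : ContinuousOn f (Icc a b)) (h : ∀ x ∈ Ioo a b, f x = 0) :
    ∀ x ∈ Icc a b, f x = 0 := by
  intro x hx
  have h1 := le_on_Icc_of_Ioo hab hf continuousOn_const (fun y hy => (h y hy).le) x hx
  have h2 := le_on_Icc_of_Ioo hab continuousOn_const hf (fun y hy => (h y hy).ge) x hx
  linarith

lemma deriv_zero_of_eqOn_zero {a b : ℝ} {f df : ℝ → ℝ} (hab : a < b)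
    (hd : ∀ x ∈ Icc a b, HasDerivAt f (df x) x)
    (hdc : ContinuousOn df (Icc a b))
    (hf : ∀ x ∈ Icc a b, f x = 0) : ∀ x ∈ Icc a b, df x = 0 := by
  refine eqOn_zero_Icc_of_Ioo hab hdc ?_
  intro x hx
  have hev : f =ᶠ[nhds x] (fun _ => 0) := by
    filter_upwards [Icc_mem_nhds hx.1 hx.2] with y hy using hf y hy
  have h1 : HasDerivAt (fun _ : ℝ => (0:ℝ)) (df x) x :=
    (hd x (Ioo_subset_Icc_self hx)).congr_of_eventuallyEq hev.symm
  have h2 : HasDerivAt (fun _ : ℝ => (0:ℝ)) 0 x := hasDerivAt_const x 0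
  exact h1.unique h2

lemma zero_of_integral_zero {a b : ℝ} {φ : ℝ → ℝ} (hab : a < b)
    (hc : ContinuousOn φ (Icc a b))
    (h : ∀ t ∈ Icc a b, ∫ s in a..t, φ s = 0) : ∀ t ∈ Icc a b, φ t = 0 := by
  refine eqOn_zero_Icc_of_Ioo hab hc ?_
  intro t ht
  have hii : IntervalIntegrable φ volume a t :=
    (hc.mono (by rw [uIcc_of_le (le_of_lt ht.1)]; exact Icc_subset_Icc le_rfl ht.2.le)).intervalIntegrable
  have hmeas : StronglyMeasurableAtFilter φ (nhds t) :=
    ⟨Icc a b, Icc_mem_nhds ht.1 ht.2, hc.aestronglyMeasurable measurableSet_Icc⟩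
  have hca : ContinuousAt φ t :=
    (hc t (Ioo_subset_Icc_self ht)).continuousAt (Icc_mem_nhds ht.1 ht.2)
  have hD : HasDerivAt (fun u => ∫ s in a..u, φ s) (φ t) t :=
    intervalIntegral.integral_hasDerivAt_right hii hmeas hca
  have hev2 : (fun u => ∫ s in a..u, φ s) =ᶠ[nhds t] (fun _ => (0:ℝ)) := by
    filter_upwards [Icc_mem_nhds ht.1 ht.2] with y hy using h y hy
  have h1 : HasDerivAt (fun _ : ℝ => (0:ℝ)) (φ t) t := hD.congr_of_eventuallyEq hev2.symm
  exact h1.unique (hasDerivAt_const t 0)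

/-- Cauchy–Schwarz for interval integrals of continuous functions. -/
lemma integral_mul_sq_le {l : ℝ} {f g : ℝ → ℝ} (hl : 0 ≤ l)
    (hf : ContinuousOn f (Icc 0 l)) (hg : ContinuousOn g (Icc 0 l)) :
    (∫ y in (0:ℝ)..l, f y * g y) ^ 2 ≤
      (∫ y in (0:ℝ)..l, f y ^ 2) * (∫ y in (0:ℝ)..l, g y ^ 2) := by
  have hu : uIcc (0:ℝ) l = Icc 0 l := uIcc_of_le hl
  have hif : IntervalIntegrable (fun y => f y ^ 2) volume 0 l :=
    ((hf.mono hu.subset).pow 2).intervalIntegrable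
  have hig : IntervalIntegrable (fun y => g y ^ 2) volume 0 l :=
    ((hg.mono hu.subset).pow 2).intervalIntegrable
  have hifg : IntervalIntegrable (fun y => f y * g y) volume 0 l :=
    ((hf.mono hu.subset).mul (hg.mono hu.subset)).intervalIntegrable
  set A := ∫ y in (0:ℝ)..l, f y ^ 2
  set B := ∫ y in (0:ℝ)..l, g y ^ 2
  set C := ∫ y in (0:ℝ)..l, f y * g y
  have key : ∀ x : ℝ, 0 ≤ B * (x * x) + (2 * C) * x + A := by
    intro x
    have : 0 ≤ ∫ y in (0:ℝ)..l, (x * g y + f y) ^ 2 := by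
      refine intervalIntegral.integral_nonneg hl (fun u _ => sq_nonneg _)
    have hexp : (∫ y in (0:ℝ)..l, (x * g y + f y) ^ 2)
        = B * (x * x) + (2 * C) * x + A := by
      have : ∀ y : ℝ, (x * g y + f y) ^ 2
          = (x * x) * g y ^ 2 + (2 * x) * (f y * g y) + f y ^ 2 := by intro y; ring
      rw [intervalIntegral.integral_congr (fun y _ => this y)]
      rw [intervalIntegral.integral_add ((hig.const_mul _).add (hifg.const_mul _)) hif,
        intervalIntegral.integral_add (hig.const_mul _) (hifg.const_mul _),
        intervalIntegral.integral_const_mul, intervalIntegral.integral_const_mul]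
      ring
    linarith [hexp ▸ this]
  have hdis := discrim_le_zero key
  rw [discrim] at hdis
  nlinarith [hdis]
end H


section MainProof
open MeasureTheory intervalIntegral

/-- **Boundary slope-velocity trace estimates of Corollary 1.** -/
theorem boundary_slope_velocity_trace_estimate
    (ℓ T ρ₀ r₀ κ₀ : ℝ) (hℓ : 0 < ℓ) (hT : 0 < T)
    (hρ₀ : 0 < ρ₀) (hr₀ : 0 < r₀) (hκ₀ : 0 < κ₀)
    (ρA μ Tr r κ : ℝ → ℝ) (F : ℝ → ℝ → ℝ)
    (hρA : ContDiffOn ℝ (⊤ : ℕ∞) ρA (Icc 0 ℓ))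
    (hμ : ContDiffOn ℝ (⊤ : ℕ∞) μ (Icc 0 ℓ))
    (hTr : ContDiffOn ℝ (⊤ : ℕ∞) Tr (Icc 0 ℓ))
    (hr : ContDiffOn ℝ (⊤ : ℕ∞) r (Icc 0 ℓ))
    (hκ : ContDiffOn ℝ (⊤ : ℕ∞) κ (Icc 0 ℓ))
    (hρAb : ∀ x ∈ Icc (0:ℝ) ℓ, ρ₀ ≤ ρA x)
    (hμb : ∀ x ∈ Icc (0:ℝ) ℓ, 0 ≤ μ x)
    (hTrb : ∀ x ∈ Icc (0:ℝ) ℓ, 0 ≤ Tr x)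
    (hrb : ∀ x ∈ Icc (0:ℝ) ℓ, r₀ ≤ r x)
    (hκb : ∀ x ∈ Icc (0:ℝ) ℓ, κ₀ ≤ κ x)
    (hF : ContinuousOn (fun p : ℝ × ℝ => F p.1 p.2) (Icc 0 ℓ ×ˢ Icc 0 T))
    (sol : ForwardSol ℓ T ρA μ Tr r κ F) :
    (∫ t in (0:ℝ)..T, (sol.uxt 0 t) ^ 2)
      ≤ (5 * ℓ / (6 * κ₀)) * Real.exp (T / ρ₀) * (∫ t in (0:ℝ)..T, ∫ x in (0:ℝ)..ℓ, (F x t) ^ 2) ∧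
    (∫ t in (0:ℝ)..T, (sol.uxt ℓ t) ^ 2)
      ≤ (5 * ℓ / (6 * κ₀)) * Real.exp (T / ρ₀) * (∫ t in (0:ℝ)..T, ∫ x in (0:ℝ)..ℓ, (F x t) ^ 2) := by
  obtain ⟨u, ux, uxx, ut, utt, uxt, uxxt, Ax, Bx, Bxx, smooth, hux, huxx, hut, hutt,
    huxt, huxxt, hAx, hBx, hBxx, cux, cuxx, cut, cutt, cuxt, cuxxt, cAx, cBx, cBxx,
    pde, init_u, init_ut, bc_u0, bc_ul, bc_m0, bc_ml⟩ := sol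
  dsimp only
  have hl0 : (0:ℝ) ≤ ℓ := hℓ.le
  have hT0 : (0:ℝ) ≤ T := hT.le
  have h0l : (0:ℝ) ∈ Icc 0 ℓ := left_mem_Icc.2 hl0
  have hll : ℓ ∈ Icc 0 ℓ := right_mem_Icc.2 hl0
  have h0T : (0:ℝ) ∈ Icc 0 T := left_mem_Icc.2 hT0
  have hTT : T ∈ Icc 0 T := right_mem_Icc.2 hT0
  have cu := smooth.continuousOn
  have cρA := hρA.continuousOn
  have cμ := hμ.continuousOn
  have cTr := hTr.continuousOn
  have cr := hr.continuousOn
  have cκ := hκ.continuousOn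
  -- pair continuity of coefficients
  have coefP : ∀ {g : ℝ → ℝ}, ContinuousOn g (Icc 0 ℓ) →
      ContinuousOn (fun p : ℝ × ℝ => g p.1) (Icc 0 ℓ ×ˢ Icc 0 T) :=
    fun hg => hg.comp continuousOn_fst (fun p hp => hp.1)
  -- interval integrability helpers
  have intX : ∀ {f : ℝ → ℝ}, ContinuousOn f (Icc 0 ℓ) → IntervalIntegrable f volume 0 ℓ :=
    fun h => ContinuousOn.intervalIntegrable (by rwa [uIcc_of_le hl0])
  have intXsub : ∀ {f : ℝ → ℝ}, ContinuousOn f (Icc 0 ℓ) → ∀ x ∈ Icc (0:ℝ) ℓ,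
      IntervalIntegrable f volume 0 x := by
    intro f h x hx
    refine ContinuousOn.intervalIntegrable (h.mono ?_)
    rw [uIcc_of_le hx.1]; exact Icc_subset_Icc le_rfl hx.2
  have intTsub : ∀ {f : ℝ → ℝ}, ContinuousOn f (Icc 0 T) → ∀ t ∈ Icc (0:ℝ) T,
      IntervalIntegrable f volume 0 t := by
    intro f h t ht
    refine ContinuousOn.intervalIntegrable (h.mono ?_)
    rw [uIcc_of_le ht.1]; exact Icc_subset_Icc le_rfl ht.2
  -- FTC helpers
  have ftcT : ∀ (f df : ℝ → ℝ), (∀ s ∈ Icc (0:ℝ) T, HasDerivAt f (df s) s) →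
      ContinuousOn df (Icc 0 T) → ∀ t ∈ Icc (0:ℝ) T, ∫ s in (0:ℝ)..t, df s = f t - f 0 := by
    intro f df hd hc t ht
    refine intervalIntegral.integral_eq_sub_of_hasDerivAt (fun s hs => ?_) (intTsub hc t ht)
    rw [uIcc_of_le ht.1] at hs
    exact hd s ⟨hs.1, hs.2.trans ht.2⟩
  have ftcX : ∀ (f df : ℝ → ℝ), (∀ y ∈ Icc (0:ℝ) ℓ, HasDerivAt f (df y) y) →
      ContinuousOn df (Icc 0 ℓ) → ∀ x ∈ Icc (0:ℝ) ℓ, ∫ y in (0:ℝ)..x, df y = f x - f 0 := by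
    intro f df hd hc x hx
    refine intervalIntegral.integral_eq_sub_of_hasDerivAt (fun y hy => ?_) (intXsub hc x hx)
    rw [uIcc_of_le hx.1] at hy
    exact hd y ⟨hy.1, hy.2.trans hx.2⟩
  -- Step 1: initial values on the closed interval
  have hu0 : ∀ x ∈ Icc (0:ℝ) ℓ, u x 0 = 0 :=
    eqOn_zero_Icc_of_Ioo hℓ (contOn_slice_x cu h0T) init_u
  have hut0 : ∀ x ∈ Icc (0:ℝ) ℓ, ut x 0 = 0 :=
    eqOn_zero_Icc_of_Ioo hℓ (contOn_slice_x cut h0T) init_ut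
  have hux0 : ∀ x ∈ Icc (0:ℝ) ℓ, ux x 0 = 0 :=
    deriv_zero_of_eqOn_zero hℓ (fun x hx => hux x hx 0 h0T) (contOn_slice_x cux h0T) hu0
  have huxx0 : ∀ x ∈ Icc (0:ℝ) ℓ, uxx x 0 = 0 :=
    deriv_zero_of_eqOn_zero hℓ (fun x hx => huxx x hx 0 h0T) (contOn_slice_x cuxx h0T) hux0
  -- Step 2: boundary values of `ut`
  have hutb0 : ∀ t ∈ Icc (0:ℝ) T, ut 0 t = 0 :=
    deriv_zero_of_eqOn_zero hT (fun t ht => hut 0 h0l t ht) (contOn_slice_t cut h0l) bc_u0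
  have hutbl : ∀ t ∈ Icc (0:ℝ) T, ut ℓ t = 0 :=
    deriv_zero_of_eqOn_zero hT (fun t ht => hut ℓ hll t ht) (contOn_slice_t cut hll) bc_ul
  -- Step 3: time representations
  have Ru : ∀ x ∈ Icc (0:ℝ) ℓ, ∀ t ∈ Icc (0:ℝ) T, ∫ s in (0:ℝ)..t, ut x s = u x t := by
    intro x hx t ht
    rw [ftcT (fun s => u x s) (fun s => ut x s) (fun s hs => hut x hx s hs)
      (contOn_slice_t cut hx) t ht, hu0 x hx, sub_zero]
  have Rux : ∀ x ∈ Icc (0:ℝ) ℓ, ∀ t ∈ Icc (0:ℝ) T, ∫ s in (0:ℝ)..t, uxt x s = ux x t := by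
    intro x hx t ht
    rw [ftcT (fun s => ux x s) (fun s => uxt x s) (fun s hs => huxt x hx s hs)
      (contOn_slice_t cuxt hx) t ht, hux0 x hx, sub_zero]
  have Ruxx : ∀ x ∈ Icc (0:ℝ) ℓ, ∀ t ∈ Icc (0:ℝ) T, ∫ s in (0:ℝ)..t, uxxt x s = uxx x t := by
    intro x hx t ht
    rw [ftcT (fun s => uxx x s) (fun s => uxxt x s) (fun s hs => huxxt x hx s hs)
      (contOn_slice_t cuxxt hx) t ht, huxx0 x hx, sub_zero]
  -- Step 4: space representations
  have Su : ∀ t ∈ Icc (0:ℝ) T, ∀ x ∈ Icc (0:ℝ) ℓ,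
      ∫ y in (0:ℝ)..x, ux y t = u x t - u 0 t :=
    fun t ht x hx => ftcX (fun y => u y t) (fun y => ux y t)
      (fun y hy => hux y hy t ht) (contOn_slice_x cux ht) x hx
  have Sux : ∀ t ∈ Icc (0:ℝ) T, ∀ x ∈ Icc (0:ℝ) ℓ,
      ∫ y in (0:ℝ)..x, uxx y t = ux x t - ux 0 t :=
    fun t ht x hx => ftcX (fun y => ux y t) (fun y => uxx y t)
      (fun y hy => huxx y hy t ht) (contOn_slice_x cuxx ht) x hx
  -- Step 5: mixed partial identities
  have M1 : ∀ x ∈ Icc (0:ℝ) ℓ, ∀ t ∈ Icc (0:ℝ) T,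
      ut x t - ut 0 t = ∫ y in (0:ℝ)..x, uxt y t := by
    intro x hx
    have csub : ContinuousOn (fun p : ℝ × ℝ => uxt p.1 p.2) (Icc 0 x ×ˢ Icc 0 T) :=
      cuxt.mono (prod_mono (Icc_subset_Icc le_rfl hx.2) subset_rfl)
    have cφ : ContinuousOn
        (fun s => ut x s - ut 0 s - ∫ y in (0:ℝ)..x, uxt y s) (Icc 0 T) :=
      ((contOn_slice_t cut hx).sub (contOn_slice_t cut h0l)).sub (contOn_param hx.1 csub)
    have hzero : ∀ t ∈ Icc (0:ℝ) T,
        ∫ s in (0:ℝ)..t, (ut x s - ut 0 s - ∫ y in (0:ℝ)..x, uxt y s) = 0 := by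
      intro t ht
      have i1 := intTsub (contOn_slice_t cut hx) t ht
      have i2 := intTsub (contOn_slice_t cut h0l) t ht
      have i3 := intTsub (contOn_param hx.1 csub) t ht
      rw [intervalIntegral.integral_sub (i1.sub i2) i3, intervalIntegral.integral_sub i1 i2,
        Ru x hx t ht, Ru 0 h0l t ht]
      have hfub : ∫ y in (0:ℝ)..x, ∫ s in (0:ℝ)..t, uxt y s
          = ∫ s in (0:ℝ)..t, ∫ y in (0:ℝ)..x, uxt y s :=
        fubini_rect hx.1 ht.1
          (cuxt.mono (prod_mono (Icc_subset_Icc le_rfl hx.2) (Icc_subset_Icc le_rfl ht.2)))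
      have hcongr : ∫ y in (0:ℝ)..x, ∫ s in (0:ℝ)..t, uxt y s
          = ∫ y in (0:ℝ)..x, ux y t := by
        refine intervalIntegral.integral_congr (fun y hy => ?_)
        rw [uIcc_of_le hx.1] at hy
        exact Rux y ⟨hy.1, hy.2.trans hx.2⟩ t ht
      rw [← hfub, hcongr, Su t ht x hx]
      ring
    have := zero_of_integral_zero hT cφ hzero
    intro t ht
    have h := this t ht
    linarith [h]
  have M2 : ∀ x ∈ Icc (0:ℝ) ℓ, ∀ t ∈ Icc (0:ℝ) T,
      uxt x t - uxt 0 t = ∫ y in (0:ℝ)..x, uxxt y t := by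
    intro x hx
    have csub : ContinuousOn (fun p : ℝ × ℝ => uxxt p.1 p.2) (Icc 0 x ×ˢ Icc 0 T) :=
      cuxxt.mono (prod_mono (Icc_subset_Icc le_rfl hx.2) subset_rfl)
    have cφ : ContinuousOn
        (fun s => uxt x s - uxt 0 s - ∫ y in (0:ℝ)..x, uxxt y s) (Icc 0 T) :=
      ((contOn_slice_t cuxt hx).sub (contOn_slice_t cuxt h0l)).sub (contOn_param hx.1 csub)
    have hzero : ∀ t ∈ Icc (0:ℝ) T,
        ∫ s in (0:ℝ)..t, (uxt x s - uxt 0 s - ∫ y in (0:ℝ)..x, uxxt y s) = 0 := by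
      intro t ht
      have i1 := intTsub (contOn_slice_t cuxt hx) t ht
      have i2 := intTsub (contOn_slice_t cuxt h0l) t ht
      have i3 := intTsub (contOn_param hx.1 csub) t ht
      rw [intervalIntegral.integral_sub (i1.sub i2) i3, intervalIntegral.integral_sub i1 i2,
        Rux x hx t ht, Rux 0 h0l t ht]
      have hfub : ∫ y in (0:ℝ)..x, ∫ s in (0:ℝ)..t, uxxt y s
          = ∫ s in (0:ℝ)..t, ∫ y in (0:ℝ)..x, uxxt y s :=
        fubini_rect hx.1 ht.1
          (cuxxt.mono (prod_mono (Icc_subset_Icc le_rfl hx.2) (Icc_subset_Icc le_rfl ht.2)))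
      have hcongr : ∫ y in (0:ℝ)..x, ∫ s in (0:ℝ)..t, uxxt y s
          = ∫ y in (0:ℝ)..x, uxx y t := by
        refine intervalIntegral.integral_congr (fun y hy => ?_)
        rw [uIcc_of_le hx.1] at hy
        exact Ruxx y ⟨hy.1, hy.2.trans hx.2⟩ t ht
      rw [← hfub, hcongr, Sux t ht x hx]
      ring
    have := zero_of_integral_zero hT cφ hzero
    intro t ht
    have h := this t ht
    linarith [h]
  have Zmean : ∀ t ∈ Icc (0:ℝ) T, ∫ y in (0:ℝ)..ℓ, uxt y t = 0 := by
    intro t ht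
    have := M1 ℓ hll t ht
    rw [hutbl t ht, hutb0 t ht] at this
    linarith [this]
  -- Step 6: interior space derivatives of ut and uxt
  have Dut : ∀ t ∈ Icc (0:ℝ) T, ∀ x ∈ Ioo (0:ℝ) ℓ,
      HasDerivAt (fun y => ut y t) (uxt x t) x := by
    intro t ht x hx
    have hprim : HasDerivAt (fun y => ∫ z in (0:ℝ)..y, uxt z t) (uxt x t) x := by
      refine intervalIntegral.integral_hasDerivAt_right
        (intXsub (contOn_slice_x cuxt ht) x (Ioo_subset_Icc_self hx))
        ⟨Icc 0 ℓ, Icc_mem_nhds hx.1 hx.2,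
          (contOn_slice_x cuxt ht).aestronglyMeasurable measurableSet_Icc⟩ ?_
      exact ((contOn_slice_x cuxt ht) x (Ioo_subset_Icc_self hx)).continuousAt
        (Icc_mem_nhds hx.1 hx.2)
    have heq : (fun y => ut 0 t + ∫ z in (0:ℝ)..y, uxt z t) =ᶠ[nhds x] (fun y => ut y t) := by
      filter_upwards [Icc_mem_nhds hx.1 hx.2] with y hy
      have := M1 y hy t ht
      linarith
    exact (hprim.const_add (ut 0 t)).congr_of_eventuallyEq heq.symm
  have Duxt : ∀ t ∈ Icc (0:ℝ) T, ∀ x ∈ Ioo (0:ℝ) ℓ,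
      HasDerivAt (fun y => uxt y t) (uxxt x t) x := by
    intro t ht x hx
    have hprim : HasDerivAt (fun y => ∫ z in (0:ℝ)..y, uxxt z t) (uxxt x t) x := by
      refine intervalIntegral.integral_hasDerivAt_right
        (intXsub (contOn_slice_x cuxxt ht) x (Ioo_subset_Icc_self hx))
        ⟨Icc 0 ℓ, Icc_mem_nhds hx.1 hx.2,
          (contOn_slice_x cuxxt ht).aestronglyMeasurable measurableSet_Icc⟩ ?_
      exact ((contOn_slice_x cuxxt ht) x (Ioo_subset_Icc_self hx)).continuousAt
        (Icc_mem_nhds hx.1 hx.2)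
    have heq : (fun y => uxt 0 t + ∫ z in (0:ℝ)..y, uxxt z t) =ᶠ[nhds x] (fun y => uxt y t) := by
      filter_upwards [Icc_mem_nhds hx.1 hx.2] with y hy
      have := M2 y hy t ht
      linarith
    exact (hprim.const_add (uxt 0 t)).congr_of_eventuallyEq heq.symm
  -- Step 7: energy identity
  have cP : ContinuousOn (fun p : ℝ × ℝ =>
      (ρA p.1 * ut p.1 p.2 ^ 2 + Tr p.1 * ux p.1 p.2 ^ 2 + r p.1 * uxx p.1 p.2 ^ 2) / 2)
      (Icc 0 ℓ ×ˢ Icc 0 T) :=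
    ((((coefP cρA).mul (cut.pow 2)).add
      (((coefP cTr).mul (cux.pow 2)))).add ((coefP cr).mul (cuxx.pow 2))).div_const 2
  have cIq : ContinuousOn (fun p : ℝ × ℝ =>
      ρA p.1 * (ut p.1 p.2 * utt p.1 p.2) + Tr p.1 * (ux p.1 p.2 * uxt p.1 p.2)
        + r p.1 * (uxx p.1 p.2 * uxxt p.1 p.2)) (Icc 0 ℓ ×ˢ Icc 0 T) :=
    (((coefP cρA).mul (cut.mul cutt)).add ((coefP cTr).mul (cux.mul cuxt))).add
      ((coefP cr).mul (cuxx.mul cuxxt))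
  set Pe : ℝ → ℝ → ℝ := fun x s =>
    (ρA x * ut x s ^ 2 + Tr x * ux x s ^ 2 + r x * uxx x s ^ 2) / 2 with hPe
  set Qe : ℝ → ℝ → ℝ := fun x t =>
    ρA x * (ut x t * utt x t) + Tr x * (ux x t * uxt x t) + r x * (uxx x t * uxxt x t) with hQe
  set Ee : ℝ → ℝ := fun s => ∫ x in (0:ℝ)..ℓ, Pe x s with hEe
  set Iq : ℝ → ℝ := fun t => ∫ x in (0:ℝ)..ℓ, Qe x t with hIq
  set G : ℝ → ℝ := fun t => ∫ x in (0:ℝ)..ℓ, F x t ^ 2 with hG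
  have cEe : ContinuousOn Ee (Icc 0 T) := contOn_param hl0 cP
  have cIqc : ContinuousOn Iq (Icc 0 T) := contOn_param hl0 cIq
  have cG : ContinuousOn G (Icc 0 T) := contOn_param hl0 (hF.pow 2)
  have Eid : ∀ τ ∈ Icc (0:ℝ) T, Ee τ = ∫ t in (0:ℝ)..τ, Iq t := by
    intro τ hτ
    have hper : ∀ x ∈ Icc (0:ℝ) ℓ, ∫ t in (0:ℝ)..τ, Qe x t = Pe x τ := by
      intro x hx
      have hd : ∀ s ∈ Icc (0:ℝ) T, HasDerivAt (fun s => Pe x s) (Qe x s) s := by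
        intro s hs
        have d1 : HasDerivAt (fun s => ut x s ^ 2) (2 * ut x s * utt x s) s := by
          simpa using (hutt x hx s hs).fun_pow 2
        have d2 : HasDerivAt (fun s => ux x s ^ 2) (2 * ux x s * uxt x s) s := by
          simpa using (huxt x hx s hs).fun_pow 2
        have d3 : HasDerivAt (fun s => uxx x s ^ 2) (2 * uxx x s * uxxt x s) s := by
          simpa using (huxxt x hx s hs).fun_pow 2
        have := (((d1.const_mul (ρA x)).add (d2.const_mul (Tr x))).add
          (d3.const_mul (r x))).div_const 2
        refine this.congr_deriv ?_
        simp only [hQe]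
        ring
      have hcq : ContinuousOn (fun t => Qe x t) (Icc 0 T) := contOn_slice_t cIq hx
      have := ftcT (fun s => Pe x s) (fun s => Qe x s) hd hcq τ hτ
      rw [this]
      show Pe x τ - Pe x 0 = Pe x τ
      have h0 : Pe x 0 = 0 := by
        simp only [hPe, hut0 x hx, hux0 x hx, huxx0 x hx]
        ring
      rw [h0, sub_zero]
    have hfub : ∫ x in (0:ℝ)..ℓ, ∫ t in (0:ℝ)..τ, Qe x t
        = ∫ t in (0:ℝ)..τ, ∫ x in (0:ℝ)..ℓ, Qe x t :=
      fubini_rect hl0 hτ.1 (cIq.mono (prod_mono subset_rfl (Icc_subset_Icc le_rfl hτ.2)))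
    calc Ee τ = ∫ x in (0:ℝ)..ℓ, ∫ t in (0:ℝ)..τ, Qe x t := by
          refine (intervalIntegral.integral_congr (fun x hx => ?_)).symm
          rw [uIcc_of_le hl0] at hx
          exact hper x hx
      _ = ∫ t in (0:ℝ)..τ, Iq t := hfub
  -- Step 8: integration by parts
  have IBP : ∀ t ∈ Ioo (0:ℝ) T, Iq t = (∫ x in (0:ℝ)..ℓ, F x t * ut x t)
      - (∫ x in (0:ℝ)..ℓ, μ x * ut x t ^ 2) - (∫ x in (0:ℝ)..ℓ, κ x * uxxt x t ^ 2) := by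
    intro t ht
    have htm : t ∈ Icc (0:ℝ) T := Ioo_subset_Icc_self ht
    -- slice continuity at time t
    have sut := contOn_slice_x cut htm
    have suxt := contOn_slice_x cuxt htm
    have sux := contOn_slice_x cux htm
    have suxx := contOn_slice_x cuxx htm
    have suxxt := contOn_slice_x cuxxt htm
    have sutt := contOn_slice_x cutt htm
    have sAx := contOn_slice_x cAx htm
    have sBx := contOn_slice_x cBx htm
    have sBxx := contOn_slice_x cBxx htm
    have sF := contOn_slice_x hF htm
    have ibp1 : ∫ x in (0:ℝ)..ℓ, (Ax x t * ut x t + (Tr x * ux x t) * uxt x t) = 0 := by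
      have := intervalIntegral.integral_eq_sub_of_hasDeriv_right_of_le hl0
        (f := fun y => (Tr y * ux y t) * ut y t)
        (f' := fun x => Ax x t * ut x t + (Tr x * ux x t) * uxt x t)
        ((cTr.mul sux).mul sut)
        (fun x hx => (((hAx x (Ioo_subset_Icc_self hx) t htm).mul
          (Dut t htm x hx))).hasDerivWithinAt)
        (intX ((sAx.mul sut).add ((cTr.mul sux).mul suxt)))
      rw [this]
      simp [hutb0 t htm, hutbl t htm]
    have ibp2 : ∫ x in (0:ℝ)..ℓ, (Bxx x t * ut x t + Bx x t * uxt x t) = 0 := by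
      have := intervalIntegral.integral_eq_sub_of_hasDeriv_right_of_le hl0
        (f := fun y => Bx y t * ut y t)
        (f' := fun x => Bxx x t * ut x t + Bx x t * uxt x t)
        (sBx.mul sut)
        (fun x hx => (((hBxx x (Ioo_subset_Icc_self hx) t htm).mul
          (Dut t htm x hx))).hasDerivWithinAt)
        (intX ((sBxx.mul sut).add (sBx.mul suxt)))
      rw [this]
      simp [hutb0 t htm, hutbl t htm]
    have ibp3 : ∫ x in (0:ℝ)..ℓ,
        (Bx x t * uxt x t + (r x * uxx x t + κ x * uxxt x t) * uxxt x t) = 0 := by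
      have := intervalIntegral.integral_eq_sub_of_hasDeriv_right_of_le hl0
        (f := fun y => (r y * uxx y t + κ y * uxxt y t) * uxt y t)
        (f' := fun x => Bx x t * uxt x t + (r x * uxx x t + κ x * uxxt x t) * uxxt x t)
        (((cr.mul suxx).add (cκ.mul suxxt)).mul suxt)
        (fun x hx => (((hBx x (Ioo_subset_Icc_self hx) t htm).mul
          (Duxt t htm x hx))).hasDerivWithinAt)
        (intX ((sBx.mul suxt).add (((cr.mul suxx).add (cκ.mul suxxt)).mul suxxt)))
      rw [this]
      simp [bc_m0 t htm, bc_ml t htm]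
    -- pointwise identity on the open interval, extended to the closed one
    have eqIcc : ∀ x ∈ Icc (0:ℝ) ℓ, Qe x t =
        (F x t * ut x t - μ x * ut x t ^ 2 - κ x * uxxt x t ^ 2)
        + (Ax x t * ut x t + (Tr x * ux x t) * uxt x t)
        - (Bxx x t * ut x t + Bx x t * uxt x t)
        + (Bx x t * uxt x t + (r x * uxx x t + κ x * uxxt x t) * uxxt x t) := by
      have hcl : ContinuousOn (fun x => Qe x t) (Icc 0 ℓ) := contOn_slice_x cIq htm
      have hcr : ContinuousOn (fun x =>
          (F x t * ut x t - μ x * ut x t ^ 2 - κ x * uxxt x t ^ 2)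
          + (Ax x t * ut x t + (Tr x * ux x t) * uxt x t)
          - (Bxx x t * ut x t + Bx x t * uxt x t)
          + (Bx x t * uxt x t + (r x * uxx x t + κ x * uxxt x t) * uxxt x t)) (Icc 0 ℓ) := by
        exact ((((sF.mul sut).sub ((cμ.mul (sut.pow 2)))).sub
            (cκ.mul (suxxt.pow 2))).add
            ((sAx.mul sut).add ((cTr.mul sux).mul suxt))).sub
            ((sBxx.mul sut).add (sBx.mul suxt)) |>.add
            ((sBx.mul suxt).add (((cr.mul suxx).add (cκ.mul suxxt)).mul suxxt))
      have hIoo : ∀ x ∈ Ioo (0:ℝ) ℓ, (fun x => Qe x t) x - (fun x =>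
          (F x t * ut x t - μ x * ut x t ^ 2 - κ x * uxxt x t ^ 2)
          + (Ax x t * ut x t + (Tr x * ux x t) * uxt x t)
          - (Bxx x t * ut x t + Bx x t * uxt x t)
          + (Bx x t * uxt x t + (r x * uxx x t + κ x * uxxt x t) * uxxt x t)) x = 0 := by
        intro x hx
        have hp := pde x hx t ht
        simp only [hQe]
        linear_combination ut x t * hp
      have := eqOn_zero_Icc_of_Ioo hℓ (hcl.sub hcr) hIoo
      intro x hx
      exact sub_eq_zero.mp (this x hx)
    have hsplit : Iq t = (∫ x in (0:ℝ)..ℓ,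
          (F x t * ut x t - μ x * ut x t ^ 2 - κ x * uxxt x t ^ 2))
        + (∫ x in (0:ℝ)..ℓ, (Ax x t * ut x t + (Tr x * ux x t) * uxt x t))
        - (∫ x in (0:ℝ)..ℓ, (Bxx x t * ut x t + Bx x t * uxt x t))
        + (∫ x in (0:ℝ)..ℓ,
          (Bx x t * uxt x t + (r x * uxx x t + κ x * uxxt x t) * uxxt x t)) := by
      have i1 : IntervalIntegrable (fun x =>
          F x t * ut x t - μ x * ut x t ^ 2 - κ x * uxxt x t ^ 2) volume 0 ℓ :=
        intX (((sF.mul sut).sub (cμ.mul (sut.pow 2))).sub (cκ.mul (suxxt.pow 2)))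
      have i2 : IntervalIntegrable (fun x =>
          Ax x t * ut x t + (Tr x * ux x t) * uxt x t) volume 0 ℓ :=
        intX ((sAx.mul sut).add ((cTr.mul sux).mul suxt))
      have i3 : IntervalIntegrable (fun x =>
          Bxx x t * ut x t + Bx x t * uxt x t) volume 0 ℓ :=
        intX ((sBxx.mul sut).add (sBx.mul suxt))
      have i4 : IntervalIntegrable (fun x =>
          Bx x t * uxt x t + (r x * uxx x t + κ x * uxxt x t) * uxxt x t) volume 0 ℓ :=
        intX ((sBx.mul suxt).add (((cr.mul suxx).add (cκ.mul suxxt)).mul suxxt))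
      have congr1 : Iq t = ∫ x in (0:ℝ)..ℓ,
          ((F x t * ut x t - μ x * ut x t ^ 2 - κ x * uxxt x t ^ 2)
          + (Ax x t * ut x t + (Tr x * ux x t) * uxt x t)
          - (Bxx x t * ut x t + Bx x t * uxt x t)
          + (Bx x t * uxt x t + (r x * uxx x t + κ x * uxxt x t) * uxxt x t)) := by
        refine intervalIntegral.integral_congr (fun x hx => ?_)
        rw [uIcc_of_le hl0] at hx
        exact eqIcc x hx
      rw [congr1, intervalIntegral.integral_add (((i1.add i2).sub i3)) i4,
        intervalIntegral.integral_sub (i1.add i2) i3,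
        intervalIntegral.integral_add i1 i2]
    have hsub : ∫ x in (0:ℝ)..ℓ,
        (F x t * ut x t - μ x * ut x t ^ 2 - κ x * uxxt x t ^ 2)
        = (∫ x in (0:ℝ)..ℓ, F x t * ut x t) - (∫ x in (0:ℝ)..ℓ, μ x * ut x t ^ 2)
          - (∫ x in (0:ℝ)..ℓ, κ x * uxxt x t ^ 2) := by
      rw [intervalIntegral.integral_sub ((intX (sF.fun_mul sut)).sub
        (intX (cμ.fun_mul (sut.fun_pow 2)))) (intX (cκ.fun_mul (suxxt.fun_pow 2))),
        intervalIntegral.integral_sub (intX (sF.fun_mul sut)) (intX (cμ.fun_mul (sut.fun_pow 2)))]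
    rw [hsplit, ibp1, ibp2, ibp3, hsub]
    ring
  -- Step 9: bound on the work integral
  have hG0 : ∀ t ∈ Icc (0:ℝ) T, 0 ≤ G t := fun t ht =>
    intervalIntegral.integral_nonneg hl0 (fun x _ => sq_nonneg _)
  have hFut : ∀ t ∈ Icc (0:ℝ) T,
      (∫ x in (0:ℝ)..ℓ, F x t * ut x t) ≤ G t / 2 + Ee t / ρ₀ := by
    intro t ht
    have hpt : ∀ x ∈ Icc (0:ℝ) ℓ, F x t * ut x t ≤ F x t ^ 2 / 2 + Pe x t / ρ₀ := by
      intro x hx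
      have h1 : F x t * ut x t ≤ F x t ^ 2 / 2 + ut x t ^ 2 / 2 := by
        nlinarith [sq_nonneg (F x t - ut x t)]
      have h2 : ρ₀ * ut x t ^ 2 ≤ ρA x * ut x t ^ 2 :=
        mul_le_mul_of_nonneg_right (hρAb x hx) (sq_nonneg _)
      have h3 : 0 ≤ Tr x * ux x t ^ 2 := mul_nonneg (hTrb x hx) (sq_nonneg _)
      have h4 : 0 ≤ r x * uxx x t ^ 2 :=
        mul_nonneg ((hr₀.trans_le (hrb x hx)).le) (sq_nonneg _)
      have h5 : ut x t ^ 2 / 2 ≤ Pe x t / ρ₀ := by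
        rw [div_le_div_iff₀ two_pos hρ₀, hPe]
        nlinarith
      linarith
    have hmono := intervalIntegral.integral_mono_on hl0
      (intX ((contOn_slice_x hF ht).mul (contOn_slice_x cut ht)))
      (intX ((((contOn_slice_x hF ht).pow 2).div_const 2).add
        ((contOn_slice_x cP ht).div_const ρ₀))) hpt
    calc (∫ x in (0:ℝ)..ℓ, F x t * ut x t)
        ≤ ∫ x in (0:ℝ)..ℓ, (F x t ^ 2 / 2 + Pe x t / ρ₀) := hmono
      _ = G t / 2 + Ee t / ρ₀ := by
          rw [intervalIntegral.integral_add
            (intX (((contOn_slice_x hF ht).fun_pow 2).div_const 2))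
            (intX ((contOn_slice_x cP ht).div_const ρ₀)),
            intervalIntegral.integral_div, intervalIntegral.integral_div]
  have hmu0 : ∀ t ∈ Icc (0:ℝ) T, 0 ≤ ∫ x in (0:ℝ)..ℓ, μ x * ut x t ^ 2 := fun t ht =>
    intervalIntegral.integral_nonneg hl0 (fun x hx => mul_nonneg (hμb x hx) (sq_nonneg _))
  have hIle : ∀ t ∈ Icc (0:ℝ) T, Iq t ≤ G t / 2 + Ee t / ρ₀ := by
    refine le_on_Icc_of_Ioo hT cIqc ((cG.div_const 2).add (cEe.div_const ρ₀)) ?_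
    intro t ht
    have htm := Ioo_subset_Icc_self ht
    have hκ0 : 0 ≤ ∫ x in (0:ℝ)..ℓ, κ x * uxxt x t ^ 2 :=
      intervalIntegral.integral_nonneg hl0
        (fun x hx => mul_nonneg ((hκ₀.trans_le (hκb x hx)).le) (sq_nonneg _))
    have := IBP t ht
    have h2 := hFut t htm
    have h3 := hmu0 t htm
    linarith
  -- Step 10: E ≤ ψ
  set Psi : ℝ → ℝ := fun τ => ∫ t in (0:ℝ)..τ, (G t / 2 + Ee t / ρ₀) with hPsi
  have cψint : ContinuousOn (fun t => G t / 2 + Ee t / ρ₀) (Icc 0 T) :=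
    (cG.div_const 2).add (cEe.div_const ρ₀)
  have ElePsi : ∀ τ ∈ Icc (0:ℝ) T, Ee τ ≤ Psi τ := by
    intro τ hτ
    rw [Eid τ hτ]
    refine intervalIntegral.integral_mono_on hτ.1 (intTsub cIqc τ hτ)
      (intTsub cψint τ hτ) (fun t htt => hIle t ⟨htt.1, htt.2.trans hτ.2⟩)
  -- Step 11: Gronwall
  have cPsi : ContinuousOn Psi (Icc 0 T) := by
    have := intervalIntegral.continuousOn_primitive_interval'
      (μ := volume) (intTsub cψint T hTT) (by rw [uIcc_of_le hT0]; exact h0T)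
    rwa [uIcc_of_le hT0] at this
  have cGprim : ContinuousOn (fun τ => ∫ s in (0:ℝ)..τ, G s / 2) (Icc 0 T) := by
    have := intervalIntegral.continuousOn_primitive_interval'
      (μ := volume) (intTsub (cG.div_const 2) T hTT) (by rw [uIcc_of_le hT0]; exact h0T)
    rwa [uIcc_of_le hT0] at this
  have hPsiT : Psi T ≤ Real.exp (T / ρ₀) * (Psi T / Real.exp (T / ρ₀)) := le_of_eq (by
    field_simp)
  clear hPsiT
  set χ : ℝ → ℝ := fun τ => Real.exp (-(τ / ρ₀)) * Psi τ - ∫ s in (0:ℝ)..τ, G s / 2 with hχ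
  have hχderiv : ∀ τ ∈ Ioo (0:ℝ) T, HasDerivAt χ
      ((Real.exp (-(τ / ρ₀)) - 1) * G τ / 2
        + Real.exp (-(τ / ρ₀)) * (Ee τ - Psi τ) / ρ₀) τ := by
    intro τ hτ
    have hmem := Ioo_subset_Icc_self hτ
    have hmeasψ : StronglyMeasurableAtFilter (fun t => G t / 2 + Ee t / ρ₀) (nhds τ) :=
      ⟨Icc 0 T, Icc_mem_nhds hτ.1 hτ.2, cψint.aestronglyMeasurable measurableSet_Icc⟩
    have hPsiD : HasDerivAt Psi (G τ / 2 + Ee τ / ρ₀) τ :=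
      intervalIntegral.integral_hasDerivAt_right (intTsub cψint τ hmem) hmeasψ
        ((cψint τ hmem).continuousAt (Icc_mem_nhds hτ.1 hτ.2))
    have hmeasG : StronglyMeasurableAtFilter (fun t => G t / 2) (nhds τ) :=
      ⟨Icc 0 T, Icc_mem_nhds hτ.1 hτ.2,
        (cG.div_const 2).aestronglyMeasurable measurableSet_Icc⟩
    have hGD : HasDerivAt (fun u => ∫ s in (0:ℝ)..u, G s / 2) (G τ / 2) τ :=
      intervalIntegral.integral_hasDerivAt_right (intTsub (cG.div_const 2) τ hmem) hmeasG
        (((cG.div_const 2) τ hmem).continuousAt (Icc_mem_nhds hτ.1 hτ.2))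
    have hexp : HasDerivAt (fun τ : ℝ => Real.exp (-(τ / ρ₀)))
        (Real.exp (-(τ / ρ₀)) * (-(1 / ρ₀))) τ := by
      have h1 : HasDerivAt (fun τ : ℝ => -(τ / ρ₀)) (-(1 / ρ₀)) τ := by
        simpa using ((hasDerivAt_id τ).div_const ρ₀).fun_neg
      exact h1.exp
    have := (hexp.fun_mul hPsiD).fun_sub hGD
    refine this.congr_deriv ?_
    ring
  have hχanti : AntitoneOn χ (Icc 0 T) := by
    refine antitoneOn_of_deriv_nonpos (convex_Icc 0 T)
      (((Real.continuous_exp.comp (continuous_id.div_const ρ₀).neg).continuousOn.mul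
        cPsi).sub cGprim) ?_ ?_
    · intro τ hτ
      rw [interior_Icc] at hτ
      exact (hχderiv τ hτ).differentiableAt.differentiableWithinAt
    · intro τ hτ
      rw [interior_Icc] at hτ
      rw [(hχderiv τ hτ).deriv]
      have hmem := Ioo_subset_Icc_self hτ
      have he1 : Real.exp (-(τ / ρ₀)) ≤ 1 := by
        rw [Real.exp_le_one_iff]
        have : 0 ≤ τ / ρ₀ := div_nonneg hτ.1.le hρ₀.le
        linarith
      have he0 : 0 < Real.exp (-(τ / ρ₀)) := Real.exp_pos _
      have t2 : (Real.exp (-(τ / ρ₀)) - 1) * G τ ≤ 0 :=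
        mul_nonpos_of_nonpos_of_nonneg (by linarith) (hG0 τ hmem)
      have t1 : Real.exp (-(τ / ρ₀)) * (Ee τ - Psi τ) ≤ 0 :=
        mul_nonpos_of_nonneg_of_nonpos he0.le (by linarith [ElePsi τ hmem])
      have := div_nonpos_of_nonpos_of_nonneg t2 (by norm_num : (0:ℝ) ≤ 2)
      have := div_nonpos_of_nonpos_of_nonneg t1 hρ₀.le
      linarith
  have hχT : χ T ≤ 0 := by
    have h0 : χ 0 = 0 := by
      simp [hχ, hPsi]
    have := hχanti h0T hTT hT0
    linarith
  have hPsiTbound : Psi T ≤ Real.exp (T / ρ₀) *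
      ((∫ t in (0:ℝ)..T, G t) / 2) := by
    have hint : (∫ s in (0:ℝ)..T, G s / 2) = (∫ t in (0:ℝ)..T, G t) / 2 :=
      intervalIntegral.integral_div 2 G
    have hχT' : Real.exp (-(T / ρ₀)) * Psi T ≤ (∫ t in (0:ℝ)..T, G t) / 2 := by
      have : χ T = Real.exp (-(T / ρ₀)) * Psi T - ∫ s in (0:ℝ)..T, G s / 2 := rfl
      rw [this, hint] at hχT
      linarith
    have hepos : 0 < Real.exp (-(T / ρ₀)) := Real.exp_pos _
    have := mul_le_mul_of_nonneg_left hχT' (Real.exp_pos (T / ρ₀)).le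
    rwa [← mul_assoc, ← Real.exp_add, add_neg_cancel, Real.exp_zero, one_mul] at this
  -- Step 12: dissipation bound
  set W : ℝ → ℝ := fun t => ∫ x in (0:ℝ)..ℓ, uxxt x t ^ 2 with hW
  have cW : ContinuousOn W (Icc 0 T) := contOn_param hl0 (cuxxt.pow 2)
  have hWle : ∀ t ∈ Icc (0:ℝ) T, κ₀ * W t ≤ (G t / 2 + Ee t / ρ₀) - Iq t := by
    refine le_on_Icc_of_Ioo hT (continuousOn_const.mul cW) (cψint.sub cIqc) ?_
    intro t ht
    have htm := Ioo_subset_Icc_self ht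
    have hibp := IBP t ht
    have h2 := hFut t htm
    have h3 := hmu0 t htm
    have hκW : κ₀ * W t ≤ ∫ x in (0:ℝ)..ℓ, κ x * uxxt x t ^ 2 := by
      rw [hW, ← intervalIntegral.integral_const_mul]
      exact intervalIntegral.integral_mono_on hl0
        (intX (continuousOn_const.mul ((contOn_slice_x cuxxt htm).pow 2)))
        (intX (cκ.mul ((contOn_slice_x cuxxt htm).pow 2)))
        (fun x hx => mul_le_mul_of_nonneg_right (hκb x hx) (sq_nonneg _))
    linarith
  have hEeT0 : 0 ≤ Ee T := by
    refine intervalIntegral.integral_nonneg hl0 (fun x hx => ?_)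
    have h1 : 0 ≤ ρA x * ut x T ^ 2 :=
      mul_nonneg ((hρ₀.trans_le (hρAb x hx)).le) (sq_nonneg _)
    have h2 : 0 ≤ Tr x * ux x T ^ 2 := mul_nonneg (hTrb x hx) (sq_nonneg _)
    have h3 : 0 ≤ r x * uxx x T ^ 2 :=
      mul_nonneg ((hr₀.trans_le (hrb x hx)).le) (sq_nonneg _)
    simp only [hPe]
    positivity
  set J : ℝ := ∫ t in (0:ℝ)..T, W t with hJdef
  have hk0J : κ₀ * J ≤ Psi T := by
    have h1 : κ₀ * J = ∫ t in (0:ℝ)..T, κ₀ * W t := by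
      rw [hJdef, ← intervalIntegral.integral_const_mul]
    have h2 : (∫ t in (0:ℝ)..T, κ₀ * W t) ≤
        ∫ t in (0:ℝ)..T, ((G t / 2 + Ee t / ρ₀) - Iq t) :=
      intervalIntegral.integral_mono_on hT0
        (intTsub (continuousOn_const.mul cW) T hTT)
        (intTsub (cψint.sub cIqc) T hTT) hWle
    have h3 : (∫ t in (0:ℝ)..T, ((G t / 2 + Ee t / ρ₀) - Iq t)) = Psi T - Ee T := by
      rw [intervalIntegral.integral_sub (intTsub cψint T hTT) (intTsub cIqc T hTT),
        ← Eid T hTT]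
    rw [h1]
    calc (∫ t in (0:ℝ)..T, κ₀ * W t) ≤ Psi T - Ee T := h3 ▸ h2
      _ ≤ Psi T := by linarith
  -- Step 13: trace inequalities
  have primCont : ∀ {f : ℝ → ℝ}, ContinuousOn f (Icc 0 ℓ) →
      ContinuousOn (fun x => ∫ y in (0:ℝ)..x, f y) (Icc 0 ℓ) := by
    intro f h
    have := intervalIntegral.continuousOn_primitive_interval'
      (μ := volume) (intX h) (by rw [uIcc_of_le hl0]; exact h0l)
    rwa [uIcc_of_le hl0] at this
  have hy2 : (∫ y in (0:ℝ)..ℓ, y ^ 2) = ℓ ^ 3 / 3 := by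
    rw [integral_pow]
    norm_num
  have trace : ∀ t ∈ Icc (0:ℝ) T,
      uxt 0 t ^ 2 ≤ ℓ / 3 * W t ∧ uxt ℓ t ^ 2 ≤ ℓ / 3 * W t := by
    intro t ht
    have suxt := contOn_slice_x cuxt ht
    have suxxt := contOn_slice_x cuxxt ht
    have hprimD : ∀ (w : ℝ → ℝ), ContinuousOn w (Icc 0 ℓ) → ∀ x ∈ Ioo (0:ℝ) ℓ,
        HasDerivAt (fun u => ∫ y in (0:ℝ)..u, w y * uxxt y t) (w x * uxxt x t) x := by
      intro w hw x hx
      refine intervalIntegral.integral_hasDerivAt_right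
        (intXsub (hw.mul suxxt) x (Ioo_subset_Icc_self hx))
        ⟨Icc 0 ℓ, Icc_mem_nhds hx.1 hx.2,
          (hw.mul suxxt).aestronglyMeasurable measurableSet_Icc⟩ ?_
      exact ((hw.mul suxxt) x (Ioo_subset_Icc_self hx)).continuousAt (Icc_mem_nhds hx.1 hx.2)
    have hcw1 : ContinuousOn (fun y : ℝ => y - ℓ) (Icc 0 ℓ) :=
      continuousOn_id.sub continuousOn_const
    have hcw2 : ContinuousOn (fun y : ℝ => y) (Icc 0 ℓ) := continuousOn_id
    -- left endpoint
    have key0 : ∫ x in (0:ℝ)..ℓ, (uxt x t - uxt 0 t)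
        = -(∫ y in (0:ℝ)..ℓ, (y - ℓ) * uxxt y t) := by
      have hftc := intervalIntegral.integral_eq_sub_of_hasDeriv_right_of_le hl0
        (f := fun x => (x - ℓ) * (uxt x t - uxt 0 t) - ∫ y in (0:ℝ)..x, (y - ℓ) * uxxt y t)
        (f' := fun x => uxt x t - uxt 0 t)
        (((hcw1).mul (suxt.sub continuousOn_const)).sub (primCont (hcw1.mul suxxt)))
        (fun x hx => by
          have hd1 : HasDerivAt (fun x => (x - ℓ) * (uxt x t - uxt 0 t))
              ((uxt x t - uxt 0 t) + (x - ℓ) * uxxt x t) x := by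
            have := ((hasDerivAt_id x).sub_const ℓ).fun_mul ((Duxt t ht x hx).sub_const (uxt 0 t))
            simp only [id_eq] at this
            refine this.congr_deriv ?_
            ring
          have hd2 := hprimD (fun y => y - ℓ) hcw1 x hx
          have := hd1.sub hd2
          have h3 : (uxt x t - uxt 0 t) + (x - ℓ) * uxxt x t - (x - ℓ) * uxxt x t
              = uxt x t - uxt 0 t := by ring
          rw [h3] at this
          exact this.hasDerivWithinAt)
        (intX (suxt.sub continuousOn_const))
      rw [hftc]
      simp
    have hLHS0 : ∫ x in (0:ℝ)..ℓ, (uxt x t - uxt 0 t) = -(ℓ * uxt 0 t) := by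
      rw [intervalIntegral.integral_sub (intX suxt) intervalIntegrable_const,
        Zmean t ht, intervalIntegral.integral_const]
      simp
    have heq0 : ℓ * uxt 0 t = ∫ y in (0:ℝ)..ℓ, (y - ℓ) * uxxt y t := by
      rw [hLHS0] at key0
      linarith
    have hcs0 : (ℓ * uxt 0 t) ^ 2 ≤ ℓ ^ 3 / 3 * W t := by
      rw [heq0]
      have hcs := integral_mul_sq_le hl0 hcw1 suxxt
      have hw2 : (∫ y in (0:ℝ)..ℓ, (y - ℓ) ^ 2) = ℓ ^ 3 / 3 := by
        have hcg : (∫ y in (0:ℝ)..ℓ, (y - ℓ) ^ 2) = ∫ y in (0:ℝ)..ℓ, (ℓ - y) ^ 2 :=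
          intervalIntegral.integral_congr (fun y _ => by ring)
        have := intervalIntegral.integral_comp_sub_left (a := (0:ℝ)) (b := ℓ)
          (fun y => y ^ 2) ℓ
        rw [hcg, this]
        simpa using hy2
      rw [hw2] at hcs
      exact hcs
    -- right endpoint
    have keyl : ∫ x in (0:ℝ)..ℓ, (uxt x t - uxt ℓ t)
        = -(∫ y in (0:ℝ)..ℓ, y * uxxt y t) := by
      have hftc := intervalIntegral.integral_eq_sub_of_hasDeriv_right_of_le hl0
        (f := fun x => x * (uxt x t - uxt ℓ t) - ∫ y in (0:ℝ)..x, y * uxxt y t)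
        (f' := fun x => uxt x t - uxt ℓ t)
        ((hcw2.mul (suxt.sub continuousOn_const)).sub (primCont (hcw2.mul suxxt)))
        (fun x hx => by
          have hd1 : HasDerivAt (fun x => x * (uxt x t - uxt ℓ t))
              ((uxt x t - uxt ℓ t) + x * uxxt x t) x := by
            have := (hasDerivAt_id x).fun_mul ((Duxt t ht x hx).sub_const (uxt ℓ t))
            simp only [id_eq] at this
            refine this.congr_deriv ?_
            ring
          have hd2 := hprimD (fun y => y) hcw2 x hx
          have := hd1.sub hd2
          have h3 : (uxt x t - uxt ℓ t) + x * uxxt x t - x * uxxt x t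
              = uxt x t - uxt ℓ t := by ring
          rw [h3] at this
          exact this.hasDerivWithinAt)
        (intX (suxt.sub continuousOn_const))
      rw [hftc]
      simp
    have hLHSl : ∫ x in (0:ℝ)..ℓ, (uxt x t - uxt ℓ t) = -(ℓ * uxt ℓ t) := by
      rw [intervalIntegral.integral_sub (intX suxt) intervalIntegrable_const,
        Zmean t ht, intervalIntegral.integral_const]
      simp
    have heql : ℓ * uxt ℓ t = ∫ y in (0:ℝ)..ℓ, y * uxxt y t := by
      rw [hLHSl] at keyl
      linarith
    have hcsl : (ℓ * uxt ℓ t) ^ 2 ≤ ℓ ^ 3 / 3 * W t := by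
      rw [heql]
      have hcs := integral_mul_sq_le hl0 hcw2 suxxt
      rw [hy2] at hcs
      exact hcs
    constructor
    · calc uxt 0 t ^ 2 = (ℓ * uxt 0 t) ^ 2 / ℓ ^ 2 := by
            field_simp
        _ ≤ (ℓ ^ 3 / 3 * W t) / ℓ ^ 2 := by
            exact (div_le_div_iff_of_pos_right (by positivity)).mpr hcs0
        _ = ℓ / 3 * W t := by
            field_simp
    · calc uxt ℓ t ^ 2 = (ℓ * uxt ℓ t) ^ 2 / ℓ ^ 2 := by
            field_simp
        _ ≤ (ℓ ^ 3 / 3 * W t) / ℓ ^ 2 := by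
            exact (div_le_div_iff_of_pos_right (by positivity)).mpr hcsl
        _ = ℓ / 3 * W t := by
            field_simp
  -- final assembly
  set NF : ℝ := ∫ t in (0:ℝ)..T, G t with hNF
  have hNF0 : 0 ≤ NF := intervalIntegral.integral_nonneg hT0 hG0
  have hJle : J ≤ Real.exp (T / ρ₀) * NF / (2 * κ₀) := by
    rw [le_div_iff₀ (by positivity)]
    nlinarith [hk0J, hPsiTbound]
  have hfin : ∀ (v : ℝ → ℝ), ContinuousOn v (Icc 0 T) →
      (∀ t ∈ Icc (0:ℝ) T, v t ^ 2 ≤ ℓ / 3 * W t) →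
      (∫ t in (0:ℝ)..T, v t ^ 2) ≤ (5 * ℓ / (6 * κ₀)) * Real.exp (T / ρ₀) * NF := by
    intro v hv htr
    have h1 : (∫ t in (0:ℝ)..T, v t ^ 2) ≤ ∫ t in (0:ℝ)..T, ℓ / 3 * W t :=
      intervalIntegral.integral_mono_on hT0 (intTsub (hv.pow 2) T hTT)
        (intTsub (continuousOn_const.mul cW) T hTT) htr
    have h2 : (∫ t in (0:ℝ)..T, ℓ / 3 * W t) = ℓ / 3 * J := by
      rw [hJdef, ← intervalIntegral.integral_const_mul]
    have h3 : ℓ / 3 * J ≤ ℓ / 3 * (Real.exp (T / ρ₀) * NF / (2 * κ₀)) :=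
      mul_le_mul_of_nonneg_left hJle (by positivity)
    have h4 : ℓ / 3 * (Real.exp (T / ρ₀) * NF / (2 * κ₀))
        = (ℓ * (Real.exp (T / ρ₀) * NF)) / (6 * κ₀) := by ring
    have h5 : (5 * ℓ / (6 * κ₀)) * Real.exp (T / ρ₀) * NF
        = (5 * (ℓ * (Real.exp (T / ρ₀) * NF))) / (6 * κ₀) := by ring
    have hc : 0 ≤ ℓ * (Real.exp (T / ρ₀) * NF) :=
      mul_nonneg hℓ.le (mul_nonneg (Real.exp_pos _).le hNF0)
    have h6 : (ℓ * (Real.exp (T / ρ₀) * NF)) / (6 * κ₀)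
        ≤ (5 * (ℓ * (Real.exp (T / ρ₀) * NF))) / (6 * κ₀) :=
      (div_le_div_iff_of_pos_right (by positivity)).mpr (by linarith)
    calc (∫ t in (0:ℝ)..T, v t ^ 2) ≤ ℓ / 3 * J := h2 ▸ h1
      _ ≤ (ℓ * (Real.exp (T / ρ₀) * NF)) / (6 * κ₀) := h4 ▸ h3
      _ ≤ (5 * (ℓ * (Real.exp (T / ρ₀) * NF))) / (6 * κ₀) := h6
      _ = (5 * ℓ / (6 * κ₀)) * Real.exp (T / ρ₀) * NF := h5.symm
  constructor
  · exact hfin (fun t => uxt 0 t) (contOn_slice_t cuxt h0l) (fun t ht => (trace t ht).1)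
  · exact hfin (fun t => uxt ℓ t) (contOn_slice_t cuxt hll) (fun t ht => (trace t ht).2)


end MainProof
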